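/- Let P be a path with h negative edges, h ≥ 3, and suppose the negative edges are partitioned (in order) into ⌊h/3⌋ disjoint groups of three consecutive negative edges. If each group of three consecutive negative edges can be replaced by a subpath segment containing at most two negative edges without increasing weight, then P can be replaced by an s–t path of weight at most w(P) containing at most h − ⌊h/3⌋ negative edges. -/

import Mathlib

/-- A walk represented as a list of (directed) edges: every edge is an edge of
the graph, and consecutive edges share an endpoint. -/
def WalkOK {V : Type*} (E : V → V → Prop) (l : List (V × V)) : Prop :=
  (∀ e ∈ l, E e.1 e.2) ∧ List.Chain' (fun e f => e.2 = f.1) l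

/-- Total weight of an edge-list walk. -/
noncomputable def wgt {V : Type*} (w : V → V → ℝ) (l : List (V × V)) : ℝ :=
  (l.map fun e => w e.1 e.2).sum

/-- Number of negative edges of an edge-list walk. -/
noncomputable def negc {V : Type*} (w : V → V → ℝ) (l : List (V × V)) : ℕ :=
  l.countP (fun e => decide (w e.1 e.2 < 0))

/-- Source of an edge-list walk. -/
def src {V : Type*} (l : List (V × V)) : Option V := l.head?.map Prod.fst

/-- Destination of an edge-list walk. -/
def dst {V : Type*} (l : List (V × V)) : Option V := l.getLast?.map Prod.snd

/-- If a path `P` with `h ≥ 3` negative edges decomposes into an initial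
segment followed by `⌊h/3⌋` groups (each a segment with exactly three of `P`'s
negative edges, followed by a further segment), and each group's three-negative
segment can be replaced by a segment with the same endpoints, no larger weight,
and at most two negative edges, then `P` can be replaced by a path with the
same endpoints, weight at most `w(P)`, and at most `h − ⌊h/3⌋` negative
edges. -/
lemma negc_append {V : Type*} (w : V → V → ℝ) (a b : List (V × V)) :
    negc w (a ++ b) = negc w a + negc w b := by simp [negc, List.countP_append]

lemma wgt_append {V : Type*} (w : V → V → ℝ) (a b : List (V × V)) :
    wgt w (a ++ b) = wgt w a + wgt w b := by simp [wgt]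

lemma src_append {V : Type*} (a b : List (V × V)) : src (a ++ b) = (src a).or (src b) := by
  cases a <;> simp [src]

lemma dst_append {V : Type*} (a b : List (V × V)) : dst (a ++ b) = (dst b).or (dst a) := by
  rcases b.eq_nil_or_concat with rfl | ⟨b', x, rfl⟩
  · simp [dst]
  · rw [List.concat_eq_append, ← List.append_assoc]
    simp [dst, List.getLast?_concat]

lemma chain_replace {V : Type*} (a m r b : List (V × V))
    (hsrc : src r = src m) (hdst : dst r = dst m)
    (hc : List.Chain' (fun e f : V × V => e.2 = f.1) (a ++ (m ++ b)))
    (hcr : List.Chain' (fun e f : V × V => e.2 = f.1) r) :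
    List.Chain' (fun e f : V × V => e.2 = f.1) (a ++ (r ++ b)) := by
  simp only [List.Chain'] at hc ⊢
  rw [List.isChain_append, List.isChain_append] at hc ⊢
  obtain ⟨ha, ⟨hm, hb, hmb⟩, ham⟩ := hc
  refine ⟨ha, ⟨hcr, hb, ?_⟩, ?_⟩
  · intro x hx y hy
    simp only [Option.mem_def] at hx hy
    have h1 : dst r = some x.2 := by simp [dst, hx]
    rw [hdst] at h1
    obtain ⟨x', hx', hx2⟩ := Option.map_eq_some_iff.mp h1
    have := hmb x' (by simpa [Option.mem_def] using hx') y (by simpa [Option.mem_def] using hy)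
    rw [← hx2]; exact this
  · intro x hx y hy
    simp only [Option.mem_def] at hx hy
    rcases r with _ | ⟨r0, rt⟩
    · have hm0 : m = [] := by
        rcases m with _ | ⟨m0, mt⟩
        · rfl
        · simp [src] at hsrc
      subst hm0
      exact ham x (by simpa [Option.mem_def] using hx) y (by simpa [Option.mem_def] using hy)
    rcases m with _ | ⟨m0, mt⟩
    · simp [src] at hsrc
    simp only [src, List.head?] at hsrc
    simp at hy
    have := ham x hx m0 (by simp [Option.mem_def, List.head?_append])
    subst hy
    simp at hsrc
    rw [this, hsrc]

lemma key_lemma {V : Type*} (E : V → V → Prop) (w : V → V → ℝ) :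
    ∀ (gs : List (List (V × V) × List (V × V))) (l₀ : List (V × V)),
    WalkOK E (l₀ ++ (gs.map fun g => g.1 ++ g.2).flatten) →
    (∀ g ∈ gs, ∃ r : List (V × V), WalkOK E r ∧ src r = src g.1 ∧ dst r = dst g.1 ∧
      wgt w r ≤ wgt w g.1 ∧ negc w r ≤ 2) →
    ∃ q : List (V × V), WalkOK E (l₀ ++ q) ∧
      src (l₀ ++ q) = src (l₀ ++ (gs.map fun g => g.1 ++ g.2).flatten) ∧
      dst (l₀ ++ q) = dst (l₀ ++ (gs.map fun g => g.1 ++ g.2).flatten) ∧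
      wgt w q ≤ wgt w (gs.map fun g => g.1 ++ g.2).flatten ∧
      negc w q ≤ (gs.map fun g => 2 + negc w g.2).sum := by
  intro gs
  induction gs with
  | nil =>
    intro l₀ hw _
    exact ⟨[], by simpa using hw, rfl, rfl, by simp [wgt], by simp [negc]⟩
  | cons g tl ih =>
    intro l₀ hw hr
    obtain ⟨r, hrOK, hsrc, hdst, hwgt, hnegc⟩ := hr g (by simp)
    set F := (tl.map fun g => g.1 ++ g.2).flatten with hF
    have hflat : ((g :: tl).map fun g => g.1 ++ g.2).flatten = (g.1 ++ g.2) ++ F := by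
      simp [hF]
    have hw1 : WalkOK E (l₀ ++ (g.1 ++ (g.2 ++ F))) := by
      rw [hflat] at hw
      simpa [List.append_assoc] using hw
    have hw' : WalkOK E ((l₀ ++ (r ++ g.2)) ++ F) := by
      constructor
      · intro e he
        simp only [List.mem_append] at he
        rcases he with (h1 | h2 | h3) | h4
        · exact hw1.1 e (by simp [h1])
        · exact hrOK.1 e h2
        · exact hw1.1 e (by simp [h3])
        · exact hw1.1 e (by simp [h4])
      · have := chain_replace l₀ g.1 r (g.2 ++ F) hsrc hdst hw1.2 hrOK.2
        simpa [List.append_assoc] using this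
    obtain ⟨q', hq'w, hq's, hq'd, hq'wgt, hq'negc⟩ := ih (l₀ ++ (r ++ g.2)) hw'
      (fun g hg => hr g (by simp [hg]))
    refine ⟨r ++ (g.2 ++ q'), ?_, ?_, ?_, ?_, ?_⟩
    · simpa [List.append_assoc] using hq'w
    · have e1 : l₀ ++ (r ++ (g.2 ++ q')) = (l₀ ++ (r ++ g.2)) ++ q' := by
        simp [List.append_assoc]
      rw [e1, hq's, hflat]
      simp [src_append, hsrc, Option.or_assoc]
    · have e1 : l₀ ++ (r ++ (g.2 ++ q')) = (l₀ ++ (r ++ g.2)) ++ q' := by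
        simp [List.append_assoc]
      rw [e1, hq'd, hflat]
      simp [dst_append, hdst, Option.or_assoc]
    · rw [hflat]
      simp only [wgt_append]
      linarith
    · simp only [negc_append, List.map_cons, List.sum_cons]
      omega

lemma negc_flatten {V : Type*} (w : V → V → ℝ) (L : List (List (V × V))) :
    negc w L.flatten = (L.map (negc w)).sum := by
  induction L with
  | nil => simp [negc]
  | cons a t ih => simp [negc_append, ih]



theorem shortcut_groups {V : Type*} (E : V → V → Prop) (w : V → V → ℝ)
    (h : ℕ) (hh : 3 ≤ h)
    (p : List (V × V)) (hp : WalkOK E p) (hneg : negc w p = h)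
    (l₀ : List (V × V)) (groups : List (List (V × V) × List (V × V)))
    (hdecomp : p = l₀ ++ (groups.map fun g => g.1 ++ g.2).flatten)
    (hlen : groups.length = h / 3)
    (hthree : ∀ g ∈ groups, negc w g.1 = 3)
    (hrepl : ∀ g ∈ groups, ∃ r : List (V × V), WalkOK E r ∧
      src r = src g.1 ∧ dst r = dst g.1 ∧ wgt w r ≤ wgt w g.1 ∧ negc w r ≤ 2) :
    ∃ p' : List (V × V), WalkOK E p' ∧ src p' = src p ∧ dst p' = dst p ∧
      wgt w p' ≤ wgt w p ∧ negc w p' ≤ h - h / 3 := by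
  subst hdecomp
  obtain ⟨q, h1, h2, h3, h4, h5⟩ := key_lemma E w groups l₀ hp hrepl
  refine ⟨l₀ ++ q, h1, h2, h3, ?_, ?_⟩
  · simp only [wgt_append]; linarith
  · -- counting
    have hsum : ∀ gs : List (List (V × V) × List (V × V)),
        (∀ g ∈ gs, negc w g.1 = 3) →
        (gs.map fun g => negc w (g.1 ++ g.2)).sum
          = 3 * gs.length + (gs.map fun g => negc w g.2).sum := by
      intro gs
      induction gs with
      | nil => simp
      | cons a t ih =>
        intro hg
        have ha : negc w a.1 = 3 := hg a (by simp)
        rw [List.map_cons, List.sum_cons, negc_append, ha,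
          ih (fun g hgt => hg g (by simp [hgt])), List.length_cons]
        simp only [List.map_cons, List.sum_cons]
        omega
    have hsum2 : ∀ gs : List (List (V × V) × List (V × V)),
        (gs.map fun g => 2 + negc w g.2).sum
          = 2 * gs.length + (gs.map fun g => negc w g.2).sum := by
      intro gs
      induction gs with
      | nil => simp
      | cons a t ih =>
        simp only [List.map_cons, List.sum_cons, List.length_cons, ih]
        omega
    have hF : negc w (groups.map fun g => g.1 ++ g.2).flatten
        = 3 * groups.length + (groups.map fun g => negc w g.2).sum := by
      rw [negc_flatten, List.map_map]
      exact hsum groups hthree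
    rw [negc_append] at hneg ⊢
    rw [hF] at hneg
    rw [hsum2] at h5
    omega
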